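/- Let α ∈ (0, π/4], let N ≥ 2, and let θ₁,…,θ_N be pairwise distinct real numbers in [π/2−α, π/2+α]. Let d̂₁,…,d̂_N be positive reals, let φ, φℓ ∈ [π/2−α, π/2+α] with φ ≠ φℓ, and let β > 0 satisfy β·sin(α)·sin(2α) < π. Define F(ψ) = Σ_{n=1}^{N} exp(i·β·sin((φℓ−ψ)/2)·sin(θₙ−(φℓ+ψ)/2)) / d̂ₙ. Then |F(φ)| < F(φℓ) = Σ_{n=1}^{N} 1/d̂ₙ. In particular, within the sector [π/2−α, π/2+α], the modulus of F attains its maximum uniquely at φ = φℓ. -/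

import Mathlib

open Complex Real

lemma aux_abs_sin_le {u a : ℝ} (ha : a ≤ Real.pi / 2) (h : |u| ≤ a) :
    |Real.sin u| ≤ Real.sin a := by
  have hπ := Real.pi_pos
  have h0 : 0 ≤ a := le_trans (abs_nonneg u) h
  rw [abs_le] at h
  rcases le_or_gt 0 u with hu | hu
  · rw [_root_.abs_of_nonneg (Real.sin_nonneg_of_nonneg_of_le_pi hu (by linarith))]
    exact Real.strictMonoOn_sin.monotoneOn ⟨by linarith, by linarith⟩
      ⟨by linarith, ha⟩ h.2
  · rw [_root_.abs_of_nonpos (Real.sin_nonpos_of_nonpos_of_neg_pi_le hu.le (by linarith)),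
      ← Real.sin_neg]
    exact Real.strictMonoOn_sin.monotoneOn ⟨by linarith, by linarith⟩
      ⟨by linarith, ha⟩ (by linarith [h.1])

/-- Proposition 1 (uniqueness part): for a sector span `2α` with `α ∈ (0, π/4]`,
pairwise-distinct antenna angles `θₙ ∈ [π/2−α, π/2+α]`, and `β·sin α·sin 2α < π`
(no grating lobes), the sUCA backprojection ambiguity function attains its maximum
modulus uniquely at `φ = φℓ`: for any `φ ≠ φℓ` in the sector, `|F(φ)| < F(φℓ) = Σₙ 1/d̂ₙ`. -/
theorem stmt_1 (α : ℝ) (hα : α ∈ Set.Ioc 0 (Real.pi / 4))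
    (N : ℕ) (hN : 2 ≤ N) (θ : Fin N → ℝ) (hθinj : Function.Injective θ)
    (hθmem : ∀ n, θ n ∈ Set.Icc (Real.pi / 2 - α) (Real.pi / 2 + α))
    (dhat : Fin N → ℝ) (hd : ∀ n, 0 < dhat n)
    (φ φℓ : ℝ) (hφ : φ ∈ Set.Icc (Real.pi / 2 - α) (Real.pi / 2 + α))
    (hφℓ : φℓ ∈ Set.Icc (Real.pi / 2 - α) (Real.pi / 2 + α)) (hne : φ ≠ φℓ)
    (β : ℝ) (hβ : 0 < β) (hgrating : β * Real.sin α * Real.sin (2 * α) < Real.pi)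
    (F : ℝ → ℂ)
    (hF : ∀ ψ : ℝ, F ψ = ∑ n : Fin N,
      Complex.exp (Complex.I * (β * Real.sin ((φℓ - ψ) / 2) *
        Real.sin (θ n - (φℓ + ψ) / 2))) / (dhat n : ℂ)) :
    ‖F φ‖ < ∑ n : Fin N, 1 / dhat n ∧
    F φℓ = ((∑ n : Fin N, 1 / dhat n : ℝ) : ℂ) := by
  obtain ⟨hα0, hα4⟩ := hα
  have hπ := Real.pi_pos
  have hα2 : α < Real.pi / 2 := lt_of_le_of_lt hα4 (by linarith)
  have hsinα : 0 < Real.sin α := Real.sin_pos_of_pos_of_lt_pi hα0 (by linarith)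
  have hsin2α : 0 < Real.sin (2 * α) := Real.sin_pos_of_pos_of_lt_pi (by linarith) (by linarith)
  -- phases
  set m : ℝ := (φℓ + φ) / 2 with hm
  set x : Fin N → ℝ := fun n => β * Real.sin ((φℓ - φ) / 2) * Real.sin (θ n - m) with hx
  set c : Fin N → ℂ := fun n => Complex.exp (Complex.I * (x n)) / (dhat n : ℂ) with hc
  have hFφ : F φ = ∑ n : Fin N, c n := by
    rw [hF]
    refine Finset.sum_congr rfl fun n _ => ?_
    simp only [hc, hx, hm]
    push_cast
    ring_nf
  -- |c n| = 1 / dhat n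
  have habs : ∀ n, ‖c n‖ = 1 / dhat n := by
    intro n
    simp only [hc, norm_div, Complex.norm_exp]
    rw [show (Complex.I * (x n : ℂ)).re = 0 by simp]
    rw [Real.exp_zero, Complex.norm_real, Real.norm_eq_abs, abs_of_pos (hd n)]
  have hcne : ∀ n, c n ≠ 0 := by
    intro n h
    have h2 := habs n
    rw [h, norm_zero] at h2
    have : (0:ℝ) < 1 / dhat n := div_pos one_pos (hd n)
    linarith
  -- the half-difference is in [-α, α] and nonzero
  have hdiff : |(φℓ - φ) / 2| ≤ α := by
    rw [abs_div, abs_of_pos (by norm_num : (0:ℝ) < 2), div_le_iff₀ (by norm_num : (0:ℝ) < 2),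
      abs_sub_le_iff]
    constructor <;>
      · have := hφ.1; have := hφ.2; have := hφℓ.1; have := hφℓ.2; linarith
  have hs0 : Real.sin ((φℓ - φ) / 2) ≠ 0 := by
    have h2 : (φℓ - φ) / 2 ≠ 0 := fun h => hne (by field_simp at h; linarith)
    have := abs_le.mp hdiff
    rcases lt_or_gt_of_ne h2 with h | h
    · exact ne_of_lt (Real.sin_neg_of_neg_of_neg_pi_lt h (by linarith))
    · exact ne_of_gt (Real.sin_pos_of_pos_of_lt_pi h (by linarith))
  -- bounds
  have hsle : |Real.sin ((φℓ - φ) / 2)| ≤ Real.sin α := aux_abs_sin_le (le_of_lt hα2) hdiff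
  have htb : ∀ n, |Real.sin (θ n - m)| ≤ Real.sin (2 * α) := by
    intro n
    apply aux_abs_sin_le (by linarith)
    rw [abs_sub_le_iff]
    have := (hθmem n).1; have := (hθmem n).2
    have := hφ.1; have := hφ.2; have := hφℓ.1; have := hφℓ.2
    constructor <;> (simp only [hm]; linarith)
  -- two distinct indices
  have h01 : (⟨0, by omega⟩ : Fin N) ≠ ⟨1, by omega⟩ := by
    intro h; exact absurd (Fin.mk.injEq _ _ _ _ ▸ h) (by simp)
  set i0 : Fin N := ⟨0, by omega⟩
  set i1 : Fin N := ⟨1, by omega⟩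
  have hθne : θ i0 ≠ θ i1 := fun h => h01 (hθinj h)
  -- phases differ
  have hxne : x i0 ≠ x i1 := by
    intro h
    apply hθne
    have hsinne : Real.sin (θ i0 - m) = Real.sin (θ i1 - m) := by
      have hb : β * Real.sin ((φℓ - φ) / 2) ≠ 0 := mul_ne_zero (ne_of_gt hβ) hs0
      exact mul_left_cancel₀ hb h
    have hmem : ∀ n : Fin N, θ n - m ∈ Set.Icc (-(Real.pi/2)) (Real.pi/2) := by
      intro n
      have := (hθmem n).1; have := (hθmem n).2
      have := hφ.1; have := hφ.2; have := hφℓ.1; have := hφℓ.2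
      constructor <;> (simp only [hm]; linarith)
    have := Real.strictMonoOn_sin.injOn (hmem i0) (hmem i1) hsinne
    linarith
  -- phase difference bounded by 2π
  have hxlt : |x i0 - x i1| < 2 * Real.pi := by
    have h1 : |x i0 - x i1| = β * |Real.sin ((φℓ - φ) / 2)| * |Real.sin (θ i0 - m) - Real.sin (θ i1 - m)| := by
      simp only [hx]
      rw [show β * Real.sin ((φℓ - φ) / 2) * Real.sin (θ i0 - m) -
          β * Real.sin ((φℓ - φ) / 2) * Real.sin (θ i1 - m) =
          β * Real.sin ((φℓ - φ) / 2) * (Real.sin (θ i0 - m) - Real.sin (θ i1 - m)) by ring]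
      rw [abs_mul, abs_mul, abs_of_pos hβ]
    rw [h1]
    have h2 : |Real.sin (θ i0 - m) - Real.sin (θ i1 - m)| ≤ 2 * Real.sin (2 * α) := by
      calc |Real.sin (θ i0 - m) - Real.sin (θ i1 - m)|
          ≤ |Real.sin (θ i0 - m)| + |Real.sin (θ i1 - m)| := abs_sub _ _
        _ ≤ 2 * Real.sin (2 * α) := by linarith [htb i0, htb i1]
    calc β * |Real.sin ((φℓ - φ) / 2)| * |Real.sin (θ i0 - m) - Real.sin (θ i1 - m)|
        ≤ β * Real.sin α * (2 * Real.sin (2 * α)) := by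
          apply mul_le_mul
          · exact mul_le_mul_of_nonneg_left hsle (le_of_lt hβ)
          · exact h2
          · exact abs_nonneg _
          · positivity
      _ = 2 * (β * Real.sin α * Real.sin (2 * α)) := by ring
      _ < 2 * Real.pi := by linarith
  -- exponentials differ
  have hexpne : Complex.exp (Complex.I * (x i0 : ℂ)) ≠ Complex.exp (Complex.I * (x i1 : ℂ)) := by
    intro h
    have h1 : Complex.exp (Complex.I * (x i0 : ℂ) - Complex.I * (x i1 : ℂ)) = 1 := by
      rw [Complex.exp_sub, h, div_self (Complex.exp_ne_zero _)]
    obtain ⟨k, hk⟩ := Complex.exp_eq_one_iff.mp h1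
    have h2 : ((x i0 - x i1 : ℝ) : ℂ) = ((k * (2 * Real.pi) : ℝ) : ℂ) := by
      have : Complex.I * ((x i0 - x i1 : ℝ) : ℂ) = Complex.I * ((k * (2 * Real.pi) : ℝ) : ℂ) := by
        push_cast at hk ⊢
        rw [show Complex.I * ((x i0 : ℂ) - (x i1 : ℂ)) = Complex.I * (x i0 : ℂ) - Complex.I * (x i1 : ℂ) by ring, hk]
        ring
      exact mul_left_cancel₀ Complex.I_ne_zero this
    have h3 : x i0 - x i1 = k * (2 * Real.pi) := by exact_mod_cast h2
    rcases eq_or_ne k 0 with rfl | hk0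
    · simp at h3; exact hxne (by linarith)
    · have : (1 : ℝ) ≤ |(k : ℝ)| := by exact_mod_cast Int.one_le_abs hk0
      have : 2 * Real.pi ≤ |x i0 - x i1| := by
        rw [h3, abs_mul, abs_of_pos (by linarith : (0:ℝ) < 2 * Real.pi)]
        nlinarith
      linarith
  -- c i0 and c i1 are not on the same ray
  have hnsr : ¬ SameRay ℝ (c i0) (c i1) := by
    intro h
    obtain ⟨r₁, r₂, hr₁, hr₂, hr⟩ := h.exists_pos (hcne i0) (hcne i1)
    apply hexpne
    have habs' : r₁ * (1 / dhat i0) = r₂ * (1 / dhat i1) := by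
      have := congrArg (‖·‖) hr
      simpa [Complex.norm_of_nonneg hr₁.le, habs, abs_of_pos hr₁, abs_of_pos hr₂,
        Complex.real_smul, norm_mul, Complex.norm_real] using this
    have h1 : ((r₁ / dhat i0 : ℝ) : ℂ) * Complex.exp (Complex.I * (x i0 : ℂ)) =
        ((r₂ / dhat i1 : ℝ) : ℂ) * Complex.exp (Complex.I * (x i1 : ℂ)) := by
      have h' := hr
      simp only [hc, Complex.real_smul] at h'
      push_cast
      linear_combination h'
    have hq : (r₁ / dhat i0 : ℝ) = r₂ / dhat i1 := by
      have d0 := (hd i0).ne'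
      have d1 := (hd i1).ne'
      field_simp at habs' ⊢
      linarith
    rw [hq] at h1
    have hq0 : ((r₂ / dhat i1 : ℝ) : ℂ) ≠ 0 := by
      exact_mod_cast ne_of_gt (div_pos hr₂ (hd i1))
    exact mul_left_cancel₀ hq0 h1
  -- second conclusion
  have h2 : F φℓ = ((∑ n : Fin N, 1 / dhat n : ℝ) : ℂ) := by
    rw [hF]
    push_cast
    refine Finset.sum_congr rfl fun n _ => ?_
    simp
  refine ⟨?_, h2⟩
  -- strict triangle inequality
  rw [hFφ]
  have hlt01 : ‖c i0 + c i1‖ < ‖c i0‖ + ‖c i1‖ := by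
    have := not_sameRay_iff_norm_add_lt.mp hnsr
    simpa using this
  calc ‖∑ n : Fin N, c n‖
      = ‖(c i0 + c i1) + ∑ n ∈ ({i0, i1} : Finset (Fin N))ᶜ, c n‖ := by
        congr 1
        rw [← Finset.sum_compl_add_sum ({i0, i1} : Finset (Fin N)) c]
        rw [Finset.sum_pair h01]
        ring
    _ ≤ ‖c i0 + c i1‖ + ‖∑ n ∈ ({i0, i1} : Finset (Fin N))ᶜ, c n‖ :=
        norm_add_le _ _
    _ ≤ ‖c i0 + c i1‖ + ∑ n ∈ ({i0, i1} : Finset (Fin N))ᶜ, ‖c n‖ := by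
        gcongr
        simpa using norm_sum_le (({i0, i1} : Finset (Fin N))ᶜ) c
    _ < (‖c i0‖ + ‖c i1‖) + ∑ n ∈ ({i0, i1} : Finset (Fin N))ᶜ, ‖c n‖ := by
        linarith
    _ = ∑ n : Fin N, ‖c n‖ := by
        rw [← Finset.sum_compl_add_sum ({i0, i1} : Finset (Fin N)) (fun n => ‖c n‖),
          Finset.sum_pair h01]
        ring
    _ = ∑ n : Fin N, 1 / dhat n := Finset.sum_congr rfl fun n _ => habs n
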